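/- Let y* ∈ ℝ^m be an equilibrium, i.e. F(y*) = 0. Assume that V is differentiable on ℝ^m, that V(y*) = 0, that V is positive definite on some ball B_r(y*) (V(y) > 0 for y ∈ B_r(y*), y ≠ y*), and that V̇(y) ≤ 0 for all y ∈ B_r(y*). Then y* is a stable equilibrium of the LCR algorithm: for every ε > 0 there exists γ > 0 such that ‖y_0 − y*‖ < γ implies ‖h^n(y_0) − y*‖ < ε for all n ≥ 0, where h^n denotes the n-fold composition of the LCR update map h. -/

import Mathlib

/-- The Lyapunov derivative `V̇(y) = ⟪∇V(y), F(y)⟫`. -/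
noncomputable def lyapDeriv {m : ℕ}
    (F : EuclideanSpace ℝ (Fin m) → EuclideanSpace ℝ (Fin m))
    (V : EuclideanSpace ℝ (Fin m) → ℝ) (y : EuclideanSpace ℝ (Fin m)) : ℝ :=
  inner ℝ (gradient V y) (F y)

/-- `f(y,η) = V(y + η F(y)) − V(y) − λ η V̇(y)`. -/
noncomputable def armijoGap {m : ℕ}
    (F : EuclideanSpace ℝ (Fin m) → EuclideanSpace ℝ (Fin m))
    (V : EuclideanSpace ℝ (Fin m) → ℝ) (lam : ℝ)
    (y : EuclideanSpace ℝ (Fin m)) (η : ℝ) : ℝ :=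
  V (y + η • F y) - V y - lam * η * lyapDeriv F V y

/-- **Stability Theorem for LCR.** Let `y*` be an equilibrium (`F y* = 0`), `V` differentiable
with `V y* = 0`, `V` positive definite on a ball `B_r(y*)` and `V̇ ≤ 0` there. Then `y*` is a
stable equilibrium of the LCR update map `h y = y + η̃(y) F y`, where `η̃(y) = η₀ f1^{-p(y)}`
and `p(y)` is the least `k` with `f(y, η₀ f1^{-k}) ≤ 0`. -/
theorem lcr_stability
    {m : ℕ} (lam η0 f1 : ℝ)
    (hlam : lam ∈ Set.Ioo (0 : ℝ) 1) (hη0 : 0 < η0) (hf1 : 1 < f1)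
    (F : EuclideanSpace ℝ (Fin m) → EuclideanSpace ℝ (Fin m))
    (V : EuclideanSpace ℝ (Fin m) → ℝ)
    (hF : Continuous F) (hV : Differentiable ℝ V) (hV0 : ∀ y, 0 ≤ V y)
    (etat : EuclideanSpace ℝ (Fin m) → ℝ)
    (hetat : ∀ y, ∃ p : ℕ, etat y = η0 / f1 ^ p ∧
      armijoGap F V lam y (etat y) ≤ 0 ∧
      ∀ k < p, ¬ armijoGap F V lam y (η0 / f1 ^ k) ≤ 0)
    (h : EuclideanSpace ℝ (Fin m) → EuclideanSpace ℝ (Fin m))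
    (hh : ∀ y, h y = y + etat y • F y)
    (ystar : EuclideanSpace ℝ (Fin m)) (hFstar : F ystar = 0)
    (r : ℝ) (hr : 0 < r)
    (hVstar : V ystar = 0)
    (hVpos : ∀ y ∈ Metric.ball ystar r, y ≠ ystar → 0 < V y)
    (hVdotneg : ∀ y ∈ Metric.ball ystar r, lyapDeriv F V y ≤ 0) :
    ∀ ε > 0, ∃ γ > 0, ∀ y0 : EuclideanSpace ℝ (Fin m),
      ‖y0 - ystar‖ < γ → ∀ n : ℕ, ‖h^[n] y0 - ystar‖ < ε := by
  obtain ⟨hlam0, hlam1⟩ := hlam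
  have hf1pos : (0:ℝ) < f1 := zero_lt_one.trans hf1
  have hetat_pos : ∀ y, 0 < etat y := by
    intro y; obtain ⟨p, hp, _⟩ := hetat y
    rw [hp]; positivity
  have hetat_le : ∀ y, etat y ≤ η0 := by
    intro y; obtain ⟨p, hp, _⟩ := hetat y
    rw [hp]
    exact div_le_self hη0.le (one_le_pow₀ hf1.le)
  have hdecr : ∀ y, dist y ystar < r → V (h y) ≤ V y := by
    intro y hy
    obtain ⟨p, hp, hgap, _⟩ := hetat y
    have hg : V (y + etat y • F y) - V y - lam * etat y * lyapDeriv F V y ≤ 0 := hgap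
    have hd : lyapDeriv F V y ≤ 0 := hVdotneg y (Metric.mem_ball.2 hy)
    have hle : lam * etat y * lyapDeriv F V y ≤ 0 :=
      mul_nonpos_of_nonneg_of_nonpos (mul_nonneg hlam0.le (hetat_pos y).le) hd
    rw [hh]; linarith
  intro ε hε
  set ρ := min ε r / 2 with hρdef
  have hρpos : 0 < ρ := by
    have := lt_min hε hr
    simp only [hρdef]; linarith
  have hρε : ρ < ε := by
    have h1 := min_le_left ε r
    simp only [hρdef]; linarith
  have hρr : ρ < r := by
    have h1 := min_le_right ε r
    simp only [hρdef]; linarith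
  -- bound on F near ystar
  obtain ⟨δ0, hδ0pos, hδ0⟩ :=
    Metric.continuousAt_iff.mp (hF.continuousAt (x := ystar)) (ρ / (2 * η0)) (by positivity)
  set δ := min δ0 (ρ / 2) with hδdef
  have hδpos : 0 < δ := lt_min hδ0pos (by positivity)
  have hδρ : δ ≤ ρ / 2 := min_le_right _ _
  have hFbound : ∀ y, dist y ystar < δ → ‖F y‖ < ρ / (2 * η0) := by
    intro y hy
    have := hδ0 (lt_of_lt_of_le hy (min_le_left _ _))
    rwa [hFstar, dist_zero_right] at this
  -- positive lower bound on V on the annulus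
  set A := Metric.closedBall ystar ρ ∩ (Metric.ball ystar δ)ᶜ with hAdef
  obtain ⟨c, hcpos, hcA⟩ : ∃ c > 0, ∀ y ∈ A, c ≤ V y := by
    rcases A.eq_empty_or_nonempty with hA | hA
    · exact ⟨1, one_pos, by simp [hA]⟩
    · have hAc : IsCompact A :=
        (isCompact_closedBall ystar ρ).inter_right Metric.isOpen_ball.isClosed_compl
      obtain ⟨z, hzA, hzmin⟩ := hAc.exists_isMinOn hA hV.continuous.continuousOn
      refine ⟨V z, ?_, fun y hy => hzmin hy⟩
      have hzr : z ∈ Metric.ball ystar r :=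
        Metric.mem_ball.2 (lt_of_le_of_lt (Metric.mem_closedBall.1 hzA.1) hρr)
      have hzne : z ≠ ystar := by
        intro hzz
        exact hzA.2 (by simp [hzz, Metric.mem_ball, hδpos])
      exact hVpos z hzr hzne
  -- choose γ so that V < c near ystar
  obtain ⟨γ0, hγ0pos, hγ0⟩ :=
    Metric.continuousAt_iff.mp hV.continuous.continuousAt c hcpos
  refine ⟨min γ0 δ, lt_min hγ0pos hδpos, ?_⟩
  intro y0 hy0 n
  have hy0' : dist y0 ystar < min γ0 δ := by rwa [dist_eq_norm]
  have key : ∀ n : ℕ, dist (h^[n] y0) ystar < δ ∧ V (h^[n] y0) < c := by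
    intro n
    induction n with
    | zero =>
      refine ⟨lt_of_lt_of_le hy0' (min_le_right _ _), ?_⟩
      have := hγ0 (lt_of_lt_of_le hy0' (min_le_left _ _))
      rw [hVstar, Real.dist_eq, sub_zero, abs_of_nonneg (hV0 y0)] at this
      simpa using this
    | succ n ih =>
      rw [Function.iterate_succ_apply']
      set y := h^[n] y0 with hy
      have hyr : dist y ystar < r := by linarith [ih.1, hδρ, hρr]
      have hVlt : V (h y) < c := lt_of_le_of_lt (hdecr y hyr) ih.2
      have hstep : ‖etat y • F y‖ < ρ / 2 := by
        rw [norm_smul, Real.norm_eq_abs, abs_of_pos (hetat_pos y)]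
        calc etat y * ‖F y‖ ≤ η0 * ‖F y‖ :=
              mul_le_mul_of_nonneg_right (hetat_le y) (norm_nonneg _)
          _ < η0 * (ρ / (2 * η0)) :=
              mul_lt_mul_of_pos_left (hFbound y ih.1) hη0
          _ = ρ / 2 := by field_simp
      have hclose : dist (h y) ystar < ρ := by
        rw [hh, dist_eq_norm, add_sub_right_comm]
        calc ‖y - ystar + etat y • F y‖ ≤ ‖y - ystar‖ + ‖etat y • F y‖ := norm_add_le _ _
          _ < δ + ρ / 2 := by
              have := ih.1; rw [dist_eq_norm] at this; linarith
          _ ≤ ρ := by linarith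
      refine ⟨?_, hVlt⟩
      by_contra hcon
      have hmem : h y ∈ A :=
        ⟨Metric.mem_closedBall.2 hclose.le, fun hm => hcon (Metric.mem_ball.1 hm)⟩
      exact absurd (hcA _ hmem) (not_le.2 hVlt)
  have := (key n).1
  rw [dist_eq_norm] at this
  linarith [hδρ, hρε]
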